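/- Let S be an integrable random variable on (Ω, 𝓕, ℙ), 𝓖 = σ(S), and let φ : L¹(Ω, 𝓕, ℙ) → L¹(Ω, 𝓖, ℙ) satisfy: (a) φ(t) = t for every constant t ∈ ℝ; (b) φ(X + Y) = φ(X) + φ(Y) for all X, Y; (c) φ(X) ≤ φ(Y) a.s. whenever X ≤ Y a.s.; (d) φ(S) = S; and (e) E[φ(X)] = E[X] for all X. Then φ(X) = X for every 𝓖-measurable X ∈ L¹(Ω, 𝓕, ℙ). -/

import Mathlib

open MeasureTheory
open scoped ENNReal

noncomputable section

/-- The σ-field generated by (the canonical strongly measurable representative of)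
an L¹ random variable. -/
def sigmaGen {Ω : Type*} [MeasurableSpace Ω] {μ : MeasureTheory.Measure Ω}
    (f : MeasureTheory.Lp ℝ 1 μ) : MeasurableSpace Ω :=
  MeasurableSpace.comap (f : Ω → ℝ) inferInstance

set_option maxHeartbeats 1600000 in
/-- a map φ : L¹(Ω, 𝓕, ℙ) → L¹(Ω, 𝓖, ℙ) (𝓖 = σ(S)) which is constant
preserving, additive, monotone, fixes S, and preserves expectations, satisfies
φ(X) = X for every 𝓖-measurable X ∈ L¹. -/
theorem condexp_like_map_fixes_measurable
    {Ω : Type*} [MeasurableSpace Ω] {μ : Measure Ω} [IsProbabilityMeasure μ]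
    (S : Lp ℝ 1 μ)
    (φ : Lp ℝ 1 μ → Lp ℝ 1 μ)
    -- φ maps into L¹(Ω, σ(S), ℙ)
    (hcod : ∀ X, AEStronglyMeasurable[sigmaGen S] (φ X : Ω → ℝ) μ)
    -- (a) constant preserving
    (hconst : ∀ t : ℝ, (φ ((memLp_const t).toLp (fun _ => t)) : Ω → ℝ) =ᵐ[μ] fun _ => t)
    -- (b) additivity
    (hadd : ∀ X Y, φ (X + Y) = φ X + φ Y)
    -- (c) monotonicity (the order on L¹ is the a.e. order)
    (hmono : ∀ X Y, X ≤ Y → φ X ≤ φ Y)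
    -- (d) φ(S) = S
    (hfix : φ S = S)
    -- (e) expectation preserving
    (hexp : ∀ X, ∫ ω, (φ X : Ω → ℝ) ω ∂μ = ∫ ω, (X : Ω → ℝ) ω ∂μ) :
    ∀ X : Lp ℝ 1 μ, AEStronglyMeasurable[sigmaGen S] (X : Ω → ℝ) μ →
      (φ X : Ω → ℝ) =ᵐ[μ] (X : Ω → ℝ) := by
  classical
  have hSmeas : Measurable (S : Ω → ℝ) := (Lp.stronglyMeasurable S).measurable
  have h𝓖le : sigmaGen S ≤ ‹MeasurableSpace Ω› := Measurable.comap_le hSmeas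
  -- bundle φ as an additive monoid hom
  set Φ : Lp ℝ 1 μ →+ Lp ℝ 1 μ := AddMonoidHom.mk' φ hadd with hΦ
  have hΦapp : ∀ X, Φ X = φ X := fun _ => rfl
  have φ0 : φ 0 = 0 := by rw [← hΦapp]; exact map_zero Φ
  have φsub : ∀ X Y, φ (X - Y) = φ X - φ Y := by
    intro X Y; rw [← hΦapp, ← hΦapp, ← hΦapp]; exact map_sub Φ X Y
  have φrat : ∀ (q : ℚ) (X : Lp ℝ 1 μ), φ ((q : ℝ) • X) = (q : ℝ) • φ X := by
    intro q X
    rw [← hΦapp, ← hΦapp]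
    exact map_ratCast_smul Φ ℝ ℝ q X
  -- from a.e. inequality to Lp inequality and back
  have le_of_ae : ∀ {X Y : Lp ℝ 1 μ}, (X : Ω → ℝ) ≤ᵐ[μ] (Y : Ω → ℝ) → X ≤ Y := by
    intro X Y h; exact (Lp.coeFn_le X Y).mp h
  have ae_of_le : ∀ {X Y : Lp ℝ 1 μ}, X ≤ Y → (X : Ω → ℝ) ≤ᵐ[μ] (Y : Ω → ℝ) := by
    intro X Y h; exact (Lp.coeFn_le X Y).mpr h
  -- key: an element dominated by its image (or dominating it) is fixed
  have fixOfLe : ∀ Y : Lp ℝ 1 μ, φ Y ≤ Y → φ Y = Y := by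
    intro Y h
    have hle := ae_of_le h
    have hint1 : Integrable (Y : Ω → ℝ) μ := L1.integrable_coeFn Y
    have hint2 : Integrable (φ Y : Ω → ℝ) μ := L1.integrable_coeFn (φ Y)
    have hz : ∫ ω, ((Y : Ω → ℝ) ω - (φ Y : Ω → ℝ) ω) ∂μ = 0 := by
      rw [integral_sub hint1 hint2, hexp Y, sub_self]
    have hnn : 0 ≤ᵐ[μ] fun ω => (Y : Ω → ℝ) ω - (φ Y : Ω → ℝ) ω :=
      hle.mono fun ω h => sub_nonneg.mpr h
    have h0 := (integral_eq_zero_iff_of_nonneg_ae hnn (hint1.sub hint2)).mp hz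
    refine Lp.ext ?_
    filter_upwards [h0] with ω hω
    have : (Y : Ω → ℝ) ω - (φ Y : Ω → ℝ) ω = 0 := hω
    linarith
  have fixOfGe : ∀ Y : Lp ℝ 1 μ, Y ≤ φ Y → φ Y = Y := by
    intro Y h
    have hle := ae_of_le h
    have hint1 : Integrable (Y : Ω → ℝ) μ := L1.integrable_coeFn Y
    have hint2 : Integrable (φ Y : Ω → ℝ) μ := L1.integrable_coeFn (φ Y)
    have hz : ∫ ω, ((φ Y : Ω → ℝ) ω - (Y : Ω → ℝ) ω) ∂μ = 0 := by
      rw [integral_sub hint2 hint1, hexp Y, sub_self]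
    have hnn : 0 ≤ᵐ[μ] fun ω => (φ Y : Ω → ℝ) ω - (Y : Ω → ℝ) ω :=
      hle.mono fun ω h => sub_nonneg.mpr h
    have h0 := (integral_eq_zero_iff_of_nonneg_ae hnn (hint2.sub hint1)).mp hz
    refine Lp.ext ?_
    filter_upwards [h0] with ω hω
    have : (φ Y : Ω → ℝ) ω - (Y : Ω → ℝ) ω = 0 := hω
    linarith
  -- fixed points are closed under inf and sup
  have fixInf : ∀ X Y : Lp ℝ 1 μ, φ X = X → φ Y = Y → φ (X ⊓ Y) = X ⊓ Y := by
    intro X Y hX hY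
    refine fixOfLe _ (le_inf ?_ ?_)
    · have := hmono (X ⊓ Y) X inf_le_left; rwa [hX] at this
    · have := hmono (X ⊓ Y) Y inf_le_right; rwa [hY] at this
  have fixSup : ∀ X Y : Lp ℝ 1 μ, φ X = X → φ Y = Y → φ (X ⊔ Y) = X ⊔ Y := by
    intro X Y hX hY
    refine fixOfGe _ (sup_le ?_ ?_)
    · have := hmono X (X ⊔ Y) le_sup_left; rwa [hX] at this
    · have := hmono Y (X ⊔ Y) le_sup_right; rwa [hY] at this
  -- fixed points are closed under monotone limits (from above and below)
  have fixLimDown : ∀ (X : Lp ℝ 1 μ) (Xn : ℕ → Lp ℝ 1 μ),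
      (∀ n, φ (Xn n) = Xn n) → (∀ n, X ≤ Xn n) →
      (∀ᵐ ω ∂μ, Filter.Tendsto (fun n => (Xn n : Ω → ℝ) ω) Filter.atTop
        (nhds ((X : Ω → ℝ) ω))) → φ X = X := by
    intro X Xn hfixn hle htend
    refine fixOfLe _ (le_of_ae ?_)
    have h1 : ∀ n, (φ X : Ω → ℝ) ≤ᵐ[μ] (Xn n : Ω → ℝ) := by
      intro n
      have := hmono X (Xn n) (hle n)
      rw [hfixn n] at this
      exact ae_of_le this
    filter_upwards [ae_all_iff.mpr h1, htend] with ω hω htω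
    exact ge_of_tendsto' htω fun n => hω n
  have fixLimUp : ∀ (X : Lp ℝ 1 μ) (Xn : ℕ → Lp ℝ 1 μ),
      (∀ n, φ (Xn n) = Xn n) → (∀ n, Xn n ≤ X) →
      (∀ᵐ ω ∂μ, Filter.Tendsto (fun n => (Xn n : Ω → ℝ) ω) Filter.atTop
        (nhds ((X : Ω → ℝ) ω))) → φ X = X := by
    intro X Xn hfixn hle htend
    refine fixOfGe _ (le_of_ae ?_)
    have h1 : ∀ n, (Xn n : Ω → ℝ) ≤ᵐ[μ] (φ X : Ω → ℝ) := by
      intro n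
      have := hmono (Xn n) X (hle n)
      rw [hfixn n] at this
      exact ae_of_le this
    filter_upwards [ae_all_iff.mpr h1, htend] with ω hω htω
    exact le_of_tendsto' htω fun n => hω n
  -- constants are fixed
  have fixConst : ∀ t : ℝ,
      φ ((memLp_const t).toLp (fun _ => t)) = (memLp_const t).toLp (fun _ => t) :=
    fun t => Lp.ext ((hconst t).trans ((memLp_const t).coeFn_toLp).symm)
  -- real scalar multiples of nonnegative fixed points are fixed
  have fixSmul : ∀ (X : Lp ℝ 1 μ), φ X = X → 0 ≤ X → ∀ c : ℝ, φ (c • X) = c • X := by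
    intro X hX hX0
    have hX0' : (0 : Ω → ℝ) ≤ᵐ[μ] (X : Ω → ℝ) := by
      have := ae_of_le hX0
      filter_upwards [this, Lp.coeFn_zero (E := ℝ) (p := 1) (μ := μ)] with ω h1 h2
      rw [← h2]; exact h1
    have key : ∀ c : ℝ, 0 ≤ c → φ (c • X) = c • X := by
      intro c hc
      -- squeeze between rational multiples
      have hn : ∀ n : ℕ, ∀ᵐ ω ∂μ,
          |(φ (c • X) : Ω → ℝ) ω - c * (X : Ω → ℝ) ω| ≤ 2 / (n + 1) * (X : Ω → ℝ) ω := by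
        intro n
        have hpos : (0 : ℝ) < 1 / (n + 1) := by positivity
        obtain ⟨q, hq1, hq2⟩ := exists_rat_btwn (show c - 1 / (n + 1) < c by linarith)
        obtain ⟨r, hr1, hr2⟩ := exists_rat_btwn (show c < c + 1 / (n + 1) by linarith)
        have hqle : (q : ℝ) • X ≤ c • X := by
          refine le_of_ae ?_
          filter_upwards [Lp.coeFn_smul (q : ℝ) X, Lp.coeFn_smul c X, hX0'] with ω h1 h2 h3
          rw [h1, h2]
          exact mul_le_mul_of_nonneg_right hq2.le h3
        have hrle : c • X ≤ (r : ℝ) • X := by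
          refine le_of_ae ?_
          filter_upwards [Lp.coeFn_smul (r : ℝ) X, Lp.coeFn_smul c X, hX0'] with ω h1 h2 h3
          rw [h1, h2]
          exact mul_le_mul_of_nonneg_right hr1.le h3
        have h1 : (q : ℝ) • X ≤ φ (c • X) := by
          have := hmono ((q : ℝ) • X) (c • X) hqle
          rwa [φrat q X, hX] at this
        have h2 : φ (c • X) ≤ (r : ℝ) • X := by
          have := hmono (c • X) ((r : ℝ) • X) hrle
          rwa [φrat r X, hX] at this
        filter_upwards [ae_of_le h1, ae_of_le h2, Lp.coeFn_smul (q : ℝ) X,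
          Lp.coeFn_smul (r : ℝ) X, hX0'] with ω e1 e2 e3 e4 e5
        rw [e3] at e1
        rw [e4] at e2
        simp only [Pi.smul_apply, smul_eq_mul] at e1 e2
        have hq' : (q : ℝ) * (X : Ω → ℝ) ω ≤ c * (X : Ω → ℝ) ω :=
          mul_le_mul_of_nonneg_right hq2.le e5
        have hr' : c * (X : Ω → ℝ) ω ≤ (r : ℝ) * (X : Ω → ℝ) ω :=
          mul_le_mul_of_nonneg_right hr1.le e5
        have hrq : ((r : ℝ) - q) * (X : Ω → ℝ) ω ≤ 2 / (n + 1) * (X : Ω → ℝ) ω := by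
          apply mul_le_mul_of_nonneg_right _ e5
          have : (2 : ℝ) / (n + 1) = 1 / (n + 1) + 1 / (n + 1) := by ring
          linarith
        have hring : ((r : ℝ) - q) * (X : Ω → ℝ) ω
            = (r : ℝ) * (X : Ω → ℝ) ω - (q : ℝ) * (X : Ω → ℝ) ω := by ring
        rw [abs_sub_le_iff]
        constructor <;> linarith
      refine Lp.ext ?_
      have htend0 : ∀ ω, Filter.Tendsto (fun n : ℕ => 2 / ((n : ℝ) + 1) * (X : Ω → ℝ) ω)
          Filter.atTop (nhds 0) := by
        intro ω
        have h1 : Filter.Tendsto (fun n : ℕ => 2 / ((n : ℝ) + 1)) Filter.atTop (nhds 0) := by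
          apply Filter.Tendsto.div_atTop tendsto_const_nhds
          exact Filter.tendsto_atTop_add_const_right _ _ tendsto_natCast_atTop_atTop
        have := h1.mul_const ((X : Ω → ℝ) ω)
        simpa using this
      filter_upwards [ae_all_iff.mpr hn, Lp.coeFn_smul c X] with ω hω hsm
      have habs : |(φ (c • X) : Ω → ℝ) ω - c * (X : Ω → ℝ) ω| ≤ 0 :=
        ge_of_tendsto' (htend0 ω) fun n => hω n
      have : (φ (c • X) : Ω → ℝ) ω = c * (X : Ω → ℝ) ω := by
        have := abs_nonneg ((φ (c • X) : Ω → ℝ) ω - c * (X : Ω → ℝ) ω)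
        have h0 : |(φ (c • X) : Ω → ℝ) ω - c * (X : Ω → ℝ) ω| = 0 := le_antisymm habs this
        have := abs_eq_zero.mp h0
        linarith
      rw [this, hsm]; simp
    intro c
    rcases le_or_gt 0 c with hc | hc
    · exact key c hc
    · have h1 : c • X = -((-c) • X) := by rw [neg_smul, neg_neg]
      rw [h1, ← hΦapp, map_neg, hΦapp, key (-c) (by linarith)]
  -- notation for indicator Lp elements of preimages under S
  set indB : ∀ B : Set ℝ, MeasurableSet B → Lp ℝ 1 μ := fun B hB =>
    indicatorConstLp 1 (hSmeas hB) (measure_ne_top μ _) (1 : ℝ) with hindB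
  -- the indicator of S ≤ c is fixed
  have fixIic : ∀ c : ℝ, ∀ hB : MeasurableSet (Set.Iic c), φ (indB _ hB) = indB _ hB := by
    intro c hB
    have hfixn : ∀ n : ℕ, φ ((memLp_const (1 : ℝ)).toLp (fun _ => (1 : ℝ)) ⊓
        (0 ⊔ ((memLp_const ((n : ℝ) * c + 1)).toLp (fun _ => ((n : ℝ) * c + 1)) -
          (n : ℝ) • S))) = (memLp_const (1 : ℝ)).toLp (fun _ => (1 : ℝ)) ⊓
        (0 ⊔ ((memLp_const ((n : ℝ) * c + 1)).toLp (fun _ => ((n : ℝ) * c + 1)) -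
          (n : ℝ) • S)) := by
      intro n
      refine fixInf _ _ (fixConst 1) (fixSup _ _ φ0 ?_)
      have hnS : φ ((n : ℝ) • S) = (n : ℝ) • S := by
        have := φrat (n : ℚ) S
        rw [hfix] at this
        simpa using this
      rw [φsub, fixConst, hnS]
    have hcoe : ∀ n : ℕ, (((memLp_const (1 : ℝ)).toLp (fun _ => (1 : ℝ)) ⊓
        (0 ⊔ ((memLp_const ((n : ℝ) * c + 1)).toLp (fun _ => ((n : ℝ) * c + 1)) -
          (n : ℝ) • S)) : Lp ℝ 1 μ) : Ω → ℝ) =ᵐ[μ]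
        fun ω => min 1 (max 0 (((n : ℝ) * c + 1) - (n : ℝ) * (S : Ω → ℝ) ω)) := by
      intro n
      filter_upwards [Lp.coeFn_inf ((memLp_const (1 : ℝ)).toLp (fun _ => (1 : ℝ)))
        ((0 : Lp ℝ 1 μ) ⊔ ((memLp_const ((n : ℝ) * c + 1)).toLp
          (fun _ => ((n : ℝ) * c + 1)) - (n : ℝ) • S)),
        Lp.coeFn_sup (0 : Lp ℝ 1 μ) ((memLp_const ((n : ℝ) * c + 1)).toLp
          (fun _ => ((n : ℝ) * c + 1)) - (n : ℝ) • S),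
        Lp.coeFn_sub ((memLp_const ((n : ℝ) * c + 1)).toLp
          (fun _ => ((n : ℝ) * c + 1))) ((n : ℝ) • S),
        Lp.coeFn_smul (n : ℝ) S,
        (memLp_const (1 : ℝ)).coeFn_toLp,
        (memLp_const ((n : ℝ) * c + 1)).coeFn_toLp,
        Lp.coeFn_zero (E := ℝ) (p := 1) (μ := μ)] with ω h1 h2 h3 h4 h5 h6 h7
      rw [h1]
      simp only [Pi.inf_apply]
      rw [h2]
      simp only [Pi.sup_apply]
      rw [h3]
      simp only [Pi.sub_apply]
      rw [h4, h5, h6, h7]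
      simp only [Pi.smul_apply, smul_eq_mul, Pi.zero_apply]
    have hind := indicatorConstLp_coeFn (p := (1 : ℝ≥0∞)) (hs := hSmeas hB)
      (hμs := measure_ne_top μ _) (c := (1 : ℝ))
    refine fixLimDown _ (fun n => (memLp_const (1 : ℝ)).toLp (fun _ => (1 : ℝ)) ⊓
        (0 ⊔ ((memLp_const ((n : ℝ) * c + 1)).toLp (fun _ => ((n : ℝ) * c + 1)) -
          (n : ℝ) • S))) hfixn ?_ ?_
    · intro n
      refine le_of_ae ?_
      filter_upwards [hcoe n, hind] with ω h1 h2
      rw [h1, h2]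
      by_cases hω : (S : Ω → ℝ) ω ≤ c
      · have hmem : ω ∈ (S : Ω → ℝ) ⁻¹' Set.Iic c := hω
        rw [Set.indicator_of_mem hmem]
        have hge : (1 : ℝ) ≤ ((n : ℝ) * c + 1) - (n : ℝ) * (S : Ω → ℝ) ω := by
          have := mul_le_mul_of_nonneg_left hω (Nat.cast_nonneg n)
          linarith
        have h2' : (1 : ℝ) ≤ max 0 (((n : ℝ) * c + 1) - (n : ℝ) * (S : Ω → ℝ) ω) :=
          le_max_of_le_right hge
        simp [min_def, h2']
      · have hmem : ω ∉ (S : Ω → ℝ) ⁻¹' Set.Iic c := hω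
        rw [Set.indicator_of_notMem hmem]
        exact le_min zero_le_one (le_max_left _ _)
    · filter_upwards [ae_all_iff.mpr hcoe, hind] with ω hω h2
      simp only [hω]
      rw [h2]
      by_cases hmem : (S : Ω → ℝ) ω ≤ c
      · have hmem' : ω ∈ (S : Ω → ℝ) ⁻¹' Set.Iic c := hmem
        rw [Set.indicator_of_mem hmem']
        have hval : ∀ n : ℕ,
            min 1 (max 0 (((n : ℝ) * c + 1) - (n : ℝ) * (S : Ω → ℝ) ω)) = 1 := by
          intro n
          have hge : (1 : ℝ) ≤ ((n : ℝ) * c + 1) - (n : ℝ) * (S : Ω → ℝ) ω := by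
            have := mul_le_mul_of_nonneg_left hmem (Nat.cast_nonneg n)
            linarith
          have h2' : (1 : ℝ) ≤ max 0 (((n : ℝ) * c + 1) - (n : ℝ) * (S : Ω → ℝ) ω) :=
            le_max_of_le_right hge
          simp [min_def, h2']
        simp only [hval]
        exact tendsto_const_nhds
      · have hmem' : ω ∉ (S : Ω → ℝ) ⁻¹' Set.Iic c := hmem
        rw [Set.indicator_of_notMem hmem']
        push_neg at hmem
        have hd : 0 < (S : Ω → ℝ) ω - c := by linarith
        apply tendsto_atTop_of_eventually_const (i₀ := ⌈1 / ((S : Ω → ℝ) ω - c)⌉₊)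
        intro n hn
        have h1 : 1 / ((S : Ω → ℝ) ω - c) ≤ (n : ℝ) :=
          (Nat.le_ceil _).trans (Nat.cast_le.mpr hn)
        have h2' : (1 : ℝ) ≤ (n : ℝ) * ((S : Ω → ℝ) ω - c) := by
          rw [div_le_iff₀ hd] at h1
          linarith
        have h3 : ((n : ℝ) * c + 1) - (n : ℝ) * (S : Ω → ℝ) ω ≤ 0 := by
          have hring : (n : ℝ) * ((S : Ω → ℝ) ω - c)
              = (n : ℝ) * (S : Ω → ℝ) ω - (n : ℝ) * c := by ring
          linarith
        have h4 : max 0 (((n : ℝ) * c + 1) - (n : ℝ) * (S : Ω → ℝ) ω) = 0 :=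
          max_eq_left h3
        rw [h4]
        simp
  -- Dynkin argument: indicators of all sets S⁻¹(B), B Borel, are fixed
  have fixInd : ∀ B : Set ℝ, MeasurableSet B → ∀ hB : MeasurableSet B,
      φ (indB B hB) = indB B hB := by
    intro B hBmeas
    refine MeasurableSpace.induction_on_inter
      (C := fun B _ => ∀ hB : MeasurableSet B, φ (indB B hB) = indB B hB)
      ((BorelSpace.measurable_eq (α := ℝ)).trans (borel_eq_generateFrom_Iic ℝ))
      isPiSystem_Iic ?_ ?_ ?_ ?_ B hBmeas
    · intro hB
      have h0 : indB ∅ hB = 0 := by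
        refine Lp.ext ?_
        filter_upwards [indicatorConstLp_coeFn (p := (1 : ℝ≥0∞)) (hs := hSmeas hB)
          (hμs := measure_ne_top μ _) (c := (1 : ℝ)),
          Lp.coeFn_zero (E := ℝ) (p := 1) (μ := μ)] with ω h1 h2
        rw [h1, h2]
        simp
      rw [h0, φ0]
    · intro t ht
      obtain ⟨c, rfl⟩ := ht
      exact fixIic c
    · intro t htmeas iht hB
      set C1 : Lp ℝ 1 μ := (memLp_const (1 : ℝ)).toLp (fun _ => (1 : ℝ)) with hC1
      have key : indB tᶜ hB = C1 - indB t htmeas := by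
        refine Lp.ext ?_
        filter_upwards [indicatorConstLp_coeFn (p := (1 : ℝ≥0∞)) (hs := hSmeas hB)
          (hμs := measure_ne_top μ _) (c := (1 : ℝ)),
          indicatorConstLp_coeFn (p := (1 : ℝ≥0∞)) (hs := hSmeas htmeas)
          (hμs := measure_ne_top μ _) (c := (1 : ℝ)),
          Lp.coeFn_sub C1 (indB t htmeas),
          (memLp_const (1 : ℝ)).coeFn_toLp] with ω h1 h2 h3 h4
        rw [h1, h3]
        simp only [Pi.sub_apply]
        rw [h2, h4]
        by_cases hω : (S : Ω → ℝ) ω ∈ t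
        · rw [Set.indicator_of_mem (show ω ∈ (S : Ω → ℝ) ⁻¹' t from hω),
            Set.indicator_of_notMem (show ω ∉ (S : Ω → ℝ) ⁻¹' tᶜ from fun h => h hω)]
          simp
        · rw [Set.indicator_of_notMem (show ω ∉ (S : Ω → ℝ) ⁻¹' t from hω),
            Set.indicator_of_mem (show ω ∈ (S : Ω → ℝ) ⁻¹' tᶜ from hω)]
          simp
      rw [key, φsub, fixConst, iht htmeas]
    · intro f hdisj hfmeas ihf hB
      -- partial unions
      set V : ℕ → Set ℝ := fun n => ⋃ i ∈ Finset.range n, f i with hV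
      have hVmeas : ∀ n, MeasurableSet (V n) := fun n =>
        (Finset.range n).measurableSet_biUnion (fun i _ => hfmeas i)
      have fixV : ∀ n, φ (indB (V n) (hVmeas n)) = indB (V n) (hVmeas n) := by
        intro n
        induction n with
        | zero =>
          have h0 : indB (V 0) (hVmeas 0) = 0 := by
            refine Lp.ext ?_
            filter_upwards [indicatorConstLp_coeFn (p := (1 : ℝ≥0∞)) (hs := hSmeas (hVmeas 0))
              (hμs := measure_ne_top μ _) (c := (1 : ℝ)),
              Lp.coeFn_zero (E := ℝ) (p := 1) (μ := μ)] with ω h1 h2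
            rw [h1, h2]
            simp [hV]
          rw [h0, φ0]
        | succ n ih =>
          have hstep : indB (V (n + 1)) (hVmeas (n + 1)) =
              indB (V n) (hVmeas n) + indB (f n) (hfmeas n) := by
            refine Lp.ext ?_
            filter_upwards [indicatorConstLp_coeFn (p := (1 : ℝ≥0∞))
              (hs := hSmeas (hVmeas (n + 1))) (hμs := measure_ne_top μ _) (c := (1 : ℝ)),
              indicatorConstLp_coeFn (p := (1 : ℝ≥0∞)) (hs := hSmeas (hVmeas n))
              (hμs := measure_ne_top μ _) (c := (1 : ℝ)),
              indicatorConstLp_coeFn (p := (1 : ℝ≥0∞)) (hs := hSmeas (hfmeas n))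
              (hμs := measure_ne_top μ _) (c := (1 : ℝ)),
              Lp.coeFn_add (indB (V n) (hVmeas n)) (indB (f n) (hfmeas n))] with ω h1 h2 h3 h4
            rw [h1, h4]
            simp only [Pi.add_apply]
            rw [h2, h3]
            have hVn1 : V (n + 1) = V n ∪ f n := by
              simp only [hV, Finset.range_add_one]
              rw [Finset.set_biUnion_insert]
              exact Set.union_comm _ _
            by_cases hω : (S : Ω → ℝ) ω ∈ f n
            · have hnotV : (S : Ω → ℝ) ω ∉ V n := by
                intro hmem
                simp only [hV] at hmem

                obtain ⟨i, hi, hmemi⟩ := Set.mem_iUnion₂.mp hmem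
                have : i ≠ n := by intro h; rw [h] at hi; simp at hi
                exact Set.disjoint_left.mp (hdisj this) hmemi hω
              have hVmem : (S : Ω → ℝ) ω ∈ V (n + 1) := by
                rw [hVn1]; exact Or.inr hω
              rw [Set.indicator_of_mem (show ω ∈ _ ⁻¹' V (n+1) from hVmem),
                Set.indicator_of_notMem (show ω ∉ _ ⁻¹' V n from hnotV),
                Set.indicator_of_mem (show ω ∈ _ ⁻¹' f n from hω)]
              ring
            · by_cases hω2 : (S : Ω → ℝ) ω ∈ V n
              · have hVmem : (S : Ω → ℝ) ω ∈ V (n + 1) := by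
                  rw [hVn1]; exact Or.inl hω2
                rw [Set.indicator_of_mem (show ω ∈ _ ⁻¹' V (n+1) from hVmem),
                  Set.indicator_of_mem (show ω ∈ _ ⁻¹' V n from hω2),
                  Set.indicator_of_notMem (show ω ∉ _ ⁻¹' f n from hω)]
                ring
              · have hVnot : (S : Ω → ℝ) ω ∉ V (n + 1) := by
                  rw [hVn1]; rintro (h | h); exacts [hω2 h, hω h]
                rw [Set.indicator_of_notMem (show ω ∉ _ ⁻¹' V (n+1) from hVnot),
                  Set.indicator_of_notMem (show ω ∉ _ ⁻¹' V n from hω2),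
                  Set.indicator_of_notMem (show ω ∉ _ ⁻¹' f n from hω)]
                ring
          rw [hstep, hadd, ih, ihf n (hfmeas n)]
      refine fixLimUp _ (fun n => indB (V n) (hVmeas n)) fixV ?_ ?_
      · intro n
        refine le_of_ae ?_
        filter_upwards [indicatorConstLp_coeFn (p := (1 : ℝ≥0∞)) (hs := hSmeas (hVmeas n))
          (hμs := measure_ne_top μ _) (c := (1 : ℝ)),
          indicatorConstLp_coeFn (p := (1 : ℝ≥0∞)) (hs := hSmeas hB)
          (hμs := measure_ne_top μ _) (c := (1 : ℝ))] with ω h1 h2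
        rw [h1, h2]
        apply Set.indicator_le_indicator_of_subset
        · apply Set.preimage_mono
          rw [hV]
          intro x hx
          obtain ⟨i, _, hmemi⟩ := Set.mem_iUnion₂.mp hx
          exact Set.mem_iUnion.mpr ⟨i, hmemi⟩
        · intro x; norm_num
      · have hae : ∀ n, (indB (V n) (hVmeas n) : Ω → ℝ) =ᵐ[μ]
            ((S : Ω → ℝ) ⁻¹' V n).indicator (fun _ => (1 : ℝ)) := fun n =>
          indicatorConstLp_coeFn (p := (1 : ℝ≥0∞)) (hs := hSmeas (hVmeas n))
            (hμs := measure_ne_top μ _) (c := (1 : ℝ))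
        filter_upwards [ae_all_iff.mpr hae,
          indicatorConstLp_coeFn (p := (1 : ℝ≥0∞)) (hs := hSmeas hB)
            (hμs := measure_ne_top μ _) (c := (1 : ℝ))] with ω hω h2
        rw [h2]
        by_cases hmem : (S : Ω → ℝ) ω ∈ ⋃ i, f i
        · obtain ⟨i₀, hi₀⟩ := Set.mem_iUnion.mp hmem
          rw [Set.indicator_of_mem (show ω ∈ _ ⁻¹' ⋃ i, f i from hmem)]
          apply tendsto_atTop_of_eventually_const (i₀ := i₀ + 1)
          intro n hn
          rw [hω n]
          have : (S : Ω → ℝ) ω ∈ V n := by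
            rw [hV]
            exact Set.mem_iUnion₂.mpr ⟨i₀, Finset.mem_range.mpr hn, hi₀⟩
          rw [Set.indicator_of_mem (show ω ∈ _ ⁻¹' V n from this)]
        · rw [Set.indicator_of_notMem (show ω ∉ _ ⁻¹' ⋃ i, f i from hmem)]
          have : ∀ n, (indB (V n) (hVmeas n) : Ω → ℝ) ω = 0 := by
            intro n
            rw [hω n]
            apply Set.indicator_of_notMem
            intro h
            apply hmem
            obtain ⟨i, _, hmemi⟩ := Set.mem_iUnion₂.mp h
            exact Set.mem_iUnion.mpr ⟨i, hmemi⟩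
          simp only [this]
          exact tendsto_const_nhds
  -- indicators of 𝓖-measurable sets are fixed
  have fixIndG : ∀ (A : Set Ω) (hA : MeasurableSet A),
      MeasurableSet[sigmaGen S] A →
      φ (indicatorConstLp 1 hA (measure_ne_top μ _) (1 : ℝ)) =
        indicatorConstLp 1 hA (measure_ne_top μ _) (1 : ℝ) := by
    intro A hA hAG
    obtain ⟨B, hBmeas, rfl⟩ := hAG
    exact fixInd B hBmeas hBmeas
  -- indicators are nonnegative
  have indNonneg : ∀ (A : Set Ω) (hA : MeasurableSet A),
      (0 : Lp ℝ 1 μ) ≤ indicatorConstLp 1 hA (measure_ne_top μ _) (1 : ℝ) := by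
    intro A hA
    refine le_of_ae ?_
    filter_upwards [indicatorConstLp_coeFn (p := (1 : ℝ≥0∞)) (hs := hA)
      (hμs := measure_ne_top μ _) (c := (1 : ℝ)),
      Lp.coeFn_zero (E := ℝ) (p := 1) (μ := μ)] with ω h1 h2
    rw [h1, h2]
    exact Set.indicator_nonneg (fun _ _ => zero_le_one) ω
  -- every 𝓖-measurable simple function is in L¹ and fixed
  have hMem : ∀ f : @SimpleFunc Ω (sigmaGen S) ℝ, MemLp (f : Ω → ℝ) 1 μ := by
    intro f
    obtain ⟨C, hC⟩ := @SimpleFunc.exists_forall_norm_le Ω ℝ (sigmaGen S) _ f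
    exact MemLp.of_bound
      ((@SimpleFunc.stronglyMeasurable Ω ℝ (sigmaGen S) _ f).mono h𝓖le).aestronglyMeasurable
      C (Filter.Eventually.of_forall hC)
  have hSimple : ∀ (f : @SimpleFunc Ω (sigmaGen S) ℝ) (hf : MemLp (f : Ω → ℝ) 1 μ),
      φ (hf.toLp _) = hf.toLp _ := by
    refine @SimpleFunc.induction Ω ℝ (sigmaGen S) _
      (fun f => ∀ hf : MemLp (f : Ω → ℝ) 1 μ, φ (hf.toLp _) = hf.toLp _) ?_ ?_
    · intro c s hs hf
      have hsm : MeasurableSet s := h𝓖le s hs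
      have key : hf.toLp _ = c • indicatorConstLp 1 hsm (measure_ne_top μ _) (1 : ℝ) := by
        refine Lp.ext ?_
        filter_upwards [hf.coeFn_toLp,
          Lp.coeFn_smul c (indicatorConstLp 1 hsm (measure_ne_top μ _) (1 : ℝ)),
          indicatorConstLp_coeFn (p := (1 : ℝ≥0∞)) (hs := hsm)
            (hμs := measure_ne_top μ _) (c := (1 : ℝ))] with ω h1 h2 h3
        rw [h1, h2]
        simp only [Pi.smul_apply, smul_eq_mul]
        rw [h3]
        simp only [SimpleFunc.coe_piecewise, SimpleFunc.coe_const]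
        by_cases hω : ω ∈ s
        · rw [Set.piecewise_eq_of_mem _ _ _ hω, Set.indicator_of_mem hω]
          simp
        · rw [Set.piecewise_eq_of_notMem _ _ _ hω, Set.indicator_of_notMem hω]
          simp
      rw [key]
      exact fixSmul _ (fixIndG s hsm hs) (indNonneg s hsm) c
    · intro f g hdisj ihf ihg hfg
      have hf := hMem f
      have hg := hMem g
      have key : hfg.toLp _ = hf.toLp _ + hg.toLp _ := by
        refine Lp.ext ?_
        filter_upwards [hfg.coeFn_toLp, hf.coeFn_toLp, hg.coeFn_toLp,
          Lp.coeFn_add (hf.toLp _) (hg.toLp _)] with ω h1 h2 h3 h4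
        rw [h1, h4]
        simp only [Pi.add_apply]
        rw [h2, h3]
        rfl
      rw [key, hadd, ihf hf, ihg hg]
  -- nonnegative 𝓖-measurable integrable functions are fixed
  have hNonneg : ∀ g : Ω → ℝ, StronglyMeasurable[sigmaGen S] g → (∀ ω, 0 ≤ g ω) →
      ∀ hg : MemLp g 1 μ, φ (hg.toLp g) = hg.toLp g := by
    intro g hgm hg0 hg
    set gE : Ω → ℝ≥0∞ := fun ω => ENNReal.ofReal (g ω) with hgE
    have hgEmeas : Measurable[sigmaGen S] gE :=
      ENNReal.measurable_ofReal.comp hgm.measurable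
    set sn : ℕ → @SimpleFunc Ω (sigmaGen S) ℝ := fun n =>
      @SimpleFunc.map Ω ℝ≥0∞ ℝ (sigmaGen S) ENNReal.toReal (@SimpleFunc.eapprox Ω (sigmaGen S) gE n)
      with hsn
    have hsnle : ∀ n ω, (sn n : Ω → ℝ) ω ≤ g ω := by
      intro n ω
      have h1 : @SimpleFunc.eapprox Ω (sigmaGen S) gE n ω ≤ gE ω := by
        rw [← @SimpleFunc.iSup_eapprox_apply Ω (sigmaGen S) gE hgEmeas ω]
        exact le_iSup (fun k => @SimpleFunc.eapprox Ω (sigmaGen S) gE k ω) n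
      have h2 : gE ω ≠ ∞ := ENNReal.ofReal_ne_top
      have h0 : (sn n : Ω → ℝ) ω = (@SimpleFunc.eapprox Ω (sigmaGen S) gE n ω).toReal := by
        simp only [hsn]; rfl
      calc (sn n : Ω → ℝ) ω = (@SimpleFunc.eapprox Ω (sigmaGen S) gE n ω).toReal := h0
        _ ≤ (gE ω).toReal := ENNReal.toReal_mono h2 h1
        _ = g ω := ENNReal.toReal_ofReal (hg0 ω)
    have hsntend : ∀ ω, Filter.Tendsto (fun n => (sn n : Ω → ℝ) ω) Filter.atTop
        (nhds (g ω)) := by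
      intro ω
      have hmono' : Monotone fun n => @SimpleFunc.eapprox Ω (sigmaGen S) gE n ω := fun m n h =>
        @SimpleFunc.monotone_eapprox Ω (sigmaGen S) gE m n h ω
      have h1 : Filter.Tendsto (fun n => @SimpleFunc.eapprox Ω (sigmaGen S) gE n ω) Filter.atTop
          (nhds (⨆ n, @SimpleFunc.eapprox Ω (sigmaGen S) gE n ω)) := tendsto_atTop_iSup hmono'
      rw [@SimpleFunc.iSup_eapprox_apply Ω (sigmaGen S) gE hgEmeas ω] at h1
      have h2 : gE ω ≠ ∞ := ENNReal.ofReal_ne_top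
      have h3 := (ENNReal.tendsto_toReal h2).comp h1
      have h4 : (gE ω).toReal = g ω := ENNReal.toReal_ofReal (hg0 ω)
      rw [h4] at h3
      refine h3.congr fun n => ?_
      simp only [hsn]; rfl
    refine fixLimUp _ (fun n => (hMem (sn n)).toLp _) (fun n => hSimple (sn n) (hMem (sn n)))
      ?_ ?_
    · intro n
      refine le_of_ae ?_
      filter_upwards [(hMem (sn n)).coeFn_toLp, hg.coeFn_toLp] with ω h1 h2
      rw [h1, h2]
      exact hsnle n ω
    · have hae : ∀ n, ((hMem (sn n)).toLp _ : Ω → ℝ) =ᵐ[μ] (sn n : Ω → ℝ) := fun n =>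
        (hMem (sn n)).coeFn_toLp
      filter_upwards [ae_all_iff.mpr hae, hg.coeFn_toLp] with ω hω h2
      rw [h2]
      have : (fun n => ((hMem (sn n)).toLp _ : Ω → ℝ) ω) = fun n => (sn n : Ω → ℝ) ω := by
        funext n; exact hω n
      rw [this]
      exact hsntend ω
  -- main argument
  intro X hX
  set X' : Ω → ℝ := hX.mk _ with hX'
  have hX'meas : StronglyMeasurable[sigmaGen S] X' := hX.stronglyMeasurable_mk
  have heq : (X : Ω → ℝ) =ᵐ[μ] X' := hX.ae_eq_mk
  have hX'mem : MemLp X' 1 μ := (memLp_congr_ae heq).mp (Lp.memLp X)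
  have hX'int : Integrable X' μ := memLp_one_iff_integrable.mp hX'mem
  have hgpmeas : StronglyMeasurable[sigmaGen S] (X' ⊔ 0) := by
    letI : MeasurableSpace Ω := sigmaGen S
    exact hX'meas.sup stronglyMeasurable_const
  have hgmmeas : StronglyMeasurable[sigmaGen S] ((-X') ⊔ 0) := by
    letI : MeasurableSpace Ω := sigmaGen S
    exact hX'meas.neg.sup stronglyMeasurable_const
  have hgpint : Integrable (X' ⊔ 0) μ := by
    have := hX'int.pos_part
    exact this.congr (Filter.Eventually.of_forall fun ω => rfl)
  have hgmint : Integrable ((-X') ⊔ 0) μ := by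
    have := hX'int.neg.pos_part
    exact this.congr (Filter.Eventually.of_forall fun ω => rfl)
  have hgpmem : MemLp (X' ⊔ 0) 1 μ := memLp_one_iff_integrable.mpr hgpint
  have hgmmem : MemLp ((-X') ⊔ 0) 1 μ := memLp_one_iff_integrable.mpr hgmint
  have fixp := hNonneg (X' ⊔ 0) hgpmeas (fun ω => le_sup_right) hgpmem
  have fixm := hNonneg ((-X') ⊔ 0) hgmmeas (fun ω => le_sup_right) hgmmem
  have keyX : X = hgpmem.toLp (X' ⊔ 0) - hgmmem.toLp ((-X') ⊔ 0) := by
    refine Lp.ext ?_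
    filter_upwards [heq, Lp.coeFn_sub (hgpmem.toLp (X' ⊔ 0)) (hgmmem.toLp ((-X') ⊔ 0)),
      hgpmem.coeFn_toLp, hgmmem.coeFn_toLp] with ω h1 h2 h3 h4
    rw [h1, h2]
    simp only [Pi.sub_apply]
    rw [h3, h4]
    simp only [Pi.sup_apply, Pi.neg_apply, Pi.zero_apply]
    rcases le_or_gt 0 (X' ω) with h | h
    · rw [max_eq_left h, max_eq_right (by linarith)]; ring
    · rw [max_eq_right h.le, max_eq_left (by linarith)]; ring
  have : φ X = X := by
    rw [keyX, φsub, fixp, fixm]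
  rw [this]
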